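/- arXiv:1204.2723 — 2 statements merged into one kernel-verified Lean document; each statement's English description precedes it below -/
import Mathlib

section
/- Let n ≥ 1 and k ≥ 2, and let q be a monic real polynomial of degree k satisfying 𝔅̄ₙq(x) = η_k^{(n)} q(x) for all x ∈ [0,1], where η_k^{(n)} = (n−1)!·n^k/(n+k−1)!. Then the coefficient of x^{k−1} in q equals −k/2. -/
open MeasureTheory Finset Polynomial

/-- The Beta operator of Mühlbach and Lupaş on `C[0,1]`. -/
noncomputable def betaOp (n : ℕ) (f : ℝ → ℝ) (x : ℝ) : ℝ :=
  if x = 0 then f 0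
  else if x = 1 then f 1
  else (∫ t in (0:ℝ)..1, t ^ ((n:ℝ) * x - 1) * (1 - t) ^ ((n:ℝ) * (1 - x) - 1) * f t) /
       (∫ t in (0:ℝ)..1, t ^ ((n:ℝ) * x - 1) * (1 - t) ^ ((n:ℝ) * (1 - x) - 1))


lemma ofReal_beta_integrand {a b : ℝ} (t : ℝ) (ht0 : 0 ≤ t) (ht1 : t ≤ 1) :
    ((t ^ (a-1) * (1-t) ^ (b-1) : ℝ) : ℂ) =
      (t:ℂ) ^ ((a:ℂ)-1) * ((1:ℂ)-t) ^ ((b:ℂ)-1) := by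
  rw [Complex.ofReal_mul, Complex.ofReal_cpow ht0, Complex.ofReal_cpow (by linarith)]
  push_cast
  ring_nf

lemma real_betaIntegral_eq {a b : ℝ} (ha : 0 < a) (hb : 0 < b) :
    (∫ t in (0:ℝ)..1, t ^ (a-1) * (1-t) ^ (b-1)) =
      Real.Gamma a * Real.Gamma b / Real.Gamma (a+b) := by
  have key : Complex.betaIntegral a b
      = ((∫ t in (0:ℝ)..1, t ^ (a-1) * (1-t) ^ (b-1) : ℝ) : ℂ) := by
    rw [Complex.betaIntegral, ← intervalIntegral.integral_ofReal]
    refine intervalIntegral.integral_congr fun t ht => ?_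
    rw [Set.uIcc_of_le (by norm_num : (0:ℝ) ≤ 1)] at ht
    exact (ofReal_beta_integrand t ht.1 ht.2).symm
  have h1 : Complex.Gamma a * Complex.Gamma b
      = Complex.Gamma (a+b) * Complex.betaIntegral a b := by
    have := Complex.Gamma_mul_Gamma_eq_betaIntegral
      (s := (a:ℂ)) (t := (b:ℂ)) (by simpa using ha) (by simpa using hb)
    simpa using this
  rw [key, show ((a:ℂ)+b) = ((a+b:ℝ):ℂ) by push_cast; ring] at h1
  rw [Complex.Gamma_ofReal, Complex.Gamma_ofReal, Complex.Gamma_ofReal] at h1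
  have h3 : Real.Gamma a * Real.Gamma b
      = Real.Gamma (a+b) * ∫ t in (0:ℝ)..1, t ^ (a-1) * (1-t) ^ (b-1) := by
    exact_mod_cast h1
  have h4 : Real.Gamma (a+b) ≠ 0 := (Real.Gamma_pos_of_pos (by linarith)).ne'
  field_simp
  linarith [h3]

lemma real_beta_integrable {a b : ℝ} (ha : 0 < a) (hb : 0 < b) :
    IntervalIntegrable (fun t => t ^ (a-1) * (1-t) ^ (b-1)) volume (0:ℝ) 1 := by
  have h := Complex.betaIntegral_convergent (u := (a:ℂ)) (v := (b:ℂ))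
    (by simpa using ha) (by simpa using hb)
  rw [intervalIntegrable_iff] at h ⊢
  have h2 : IntegrableOn
      (fun x : ℝ => ((x:ℂ) ^ ((a:ℂ)-1) * (1-(x:ℂ)) ^ ((b:ℂ)-1)).re)
      (Set.uIoc (0:ℝ) 1) volume := h.re
  refine h2.congr_fun (fun t ht => ?_) measurableSet_uIoc
  rw [Set.uIoc_of_le (by norm_num : (0:ℝ) ≤ 1)] at ht
  beta_reduce
  rw [← ofReal_beta_integrand t ht.1.le ht.2, Complex.ofReal_re]



lemma real_betaIntegral_pos {a b : ℝ} (ha : 0 < a) (hb : 0 < b) :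
    0 < ∫ t in (0:ℝ)..1, t ^ (a-1) * (1-t) ^ (b-1) := by
  rw [real_betaIntegral_eq ha hb]
  exact div_pos (mul_pos (Real.Gamma_pos_of_pos ha) (Real.Gamma_pos_of_pos hb))
    (Real.Gamma_pos_of_pos (by linarith))

lemma Gamma_add_nat {a : ℝ} (ha : 0 < a) (j : ℕ) :
    Real.Gamma (a + j) = (∏ i ∈ range j, (a + i)) * Real.Gamma a := by
  induction j with
  | zero => simp
  | succ m ih =>
    have h1 : a + (m+1 : ℕ) = (a + m) + 1 := by push_cast; ring
    rw [h1, Real.Gamma_add_one (by positivity), ih, prod_range_succ]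
    push_cast; ring

lemma beta_shift {a b : ℝ} (ha : 0 < a) (hb : 0 < b) (j : ℕ) :
    (∫ t in (0:ℝ)..1, t ^ (a + j - 1) * (1-t) ^ (b-1)) =
      (∏ i ∈ range j, (a + i)/(a + b + i)) *
        ∫ t in (0:ℝ)..1, t ^ (a-1) * (1-t) ^ (b-1) := by
  rw [real_betaIntegral_eq (by positivity) hb, real_betaIntegral_eq ha hb,
    show a + (j:ℝ) + b = (a + b) + j by ring, Gamma_add_nat ha j,
    Gamma_add_nat (by linarith : (0:ℝ) < a + b) j, prod_div_distrib]
  have hGa := (Real.Gamma_pos_of_pos ha).ne'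
  have hGab := (Real.Gamma_pos_of_pos (show (0:ℝ) < a + b by linarith)).ne'
  have h1 : ∀ i ∈ range j, a + (i:ℝ) ≠ 0 := fun i _ => by positivity
  have h2 : ∀ i ∈ range j, a + b + (i:ℝ) ≠ 0 := fun i _ => by positivity
  have hp1 : (∏ i ∈ range j, (a + (i:ℝ))) ≠ 0 := prod_ne_zero_iff.2 h1
  have hp2 : (∏ i ∈ range j, (a + b + (i:ℝ))) ≠ 0 := prod_ne_zero_iff.2 h2
  field_simp

lemma factorial_prod (n : ℕ) (hn : 1 ≤ n) (k : ℕ) :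
    ((Nat.factorial (n + k - 1) : ℝ)) =
      (Nat.factorial (n-1) : ℝ) * ∏ i ∈ range k, ((n:ℝ) + i) := by
  induction k with
  | zero => simp
  | succ m ih =>
    have h1 : n + (m+1) - 1 = (n + m - 1) + 1 := by omega
    have h2 : (((n + m - 1) + 1 : ℕ) : ℝ) = (n:ℝ) + m := by
      have : n + m - 1 + 1 = n + m := by omega
      rw [this]; push_cast; ring
    rw [h1, Nat.factorial_succ, prod_range_succ, Nat.cast_mul, ih, h2]
    push_cast; ring





lemma betaOp_poly (n : ℕ) (hn : 1 ≤ n) (q : Polynomial ℝ) {x : ℝ}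
    (hx : x ∈ Set.Ioo (0:ℝ) 1) :
    betaOp n (fun t => q.eval t) x =
      ∑ j ∈ range (q.natDegree + 1),
        q.coeff j * ∏ i ∈ range j, ((n:ℝ) * x + i) / ((n:ℝ) + i) := by
  obtain ⟨hx0, hx1⟩ := hx
  have hn0 : (0:ℝ) < n := by exact_mod_cast hn
  set a : ℝ := (n:ℝ) * x with ha_def
  set b : ℝ := (n:ℝ) * (1 - x) with hb_def
  have ha : 0 < a := mul_pos hn0 hx0
  have hb : 0 < b := mul_pos hn0 (by linarith)
  have hab : a + b = (n:ℝ) := by rw [ha_def, hb_def]; ring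
  rw [betaOp, if_neg (ne_of_gt hx0), if_neg (ne_of_lt hx1)]
  have hnum : (∫ t in (0:ℝ)..1, t ^ (a - 1) * (1 - t) ^ (b - 1) * q.eval t)
      = ∑ j ∈ range (q.natDegree + 1),
          q.coeff j * ∫ t in (0:ℝ)..1, t ^ (a + j - 1) * (1 - t) ^ (b - 1) := by
    simp_rw [← intervalIntegral.integral_const_mul]
    rw [← intervalIntegral.integral_finset_sum (fun (j : ℕ) (_ : j ∈ range (q.natDegree+1)) =>
      ((real_beta_integrable (add_pos_of_pos_of_nonneg ha (Nat.cast_nonneg j)) hb).const_mul (q.coeff j)))]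
    refine intervalIntegral.integral_congr_ae (Filter.Eventually.of_forall fun t ht => ?_)
    rw [Set.uIoc_of_le (by norm_num : (0:ℝ) ≤ 1)] at ht
    have ht0 : 0 < t := ht.1
    rw [Polynomial.eval_eq_sum_range, Finset.mul_sum, Finset.sum_congr rfl]
    intro j _
    rw [show a + (j:ℝ) - 1 = (a-1) + j by ring, Real.rpow_add ht0, Real.rpow_natCast]
    ring
  rw [hnum, Finset.sum_div, Finset.sum_congr rfl]
  intro j _
  rw [beta_shift ha hb j, hab]
  have hden := (real_betaIntegral_pos ha hb).ne'
  rw [mul_div_assoc, mul_div_cancel_right₀ _ hden]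

/-- A monic eigenpolynomial of degree `k ≥ 2` of the Beta operator with eigenvalue
`η_k^{(n)}` has coefficient `-k/2` of `x^{k-1}`. -/
theorem betaOp_eigenpolynomial_subleading_coeff (n : ℕ) (hn : 1 ≤ n) (k : ℕ) (hk : 2 ≤ k)
    (q : Polynomial ℝ) (hmonic : q.Monic) (hdeg : q.natDegree = k)
    (heig : ∀ x ∈ Set.Icc (0:ℝ) 1,
      betaOp n (fun t => q.eval t) x =
        ((Nat.factorial (n - 1) : ℝ) * (n : ℝ) ^ k / (Nat.factorial (n + k - 1) : ℝ))
          * q.eval x) :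
    q.coeff (k - 1) = -(k : ℝ) / 2 := by
  have hn0 : (0:ℝ) < n := by exact_mod_cast hn
  set η : ℝ := (Nat.factorial (n - 1) : ℝ) * (n : ℝ) ^ k / (Nat.factorial (n + k - 1) : ℝ)
    with hη_def
  set w : ℕ → ℝ := fun j => ∏ i ∈ range j, ((n:ℝ) + i)⁻¹ with hw_def
  set P : Polynomial ℝ := ∑ j ∈ range (k + 1),
      C (q.coeff j * w j * (n:ℝ) ^ j) * ∏ i ∈ range j, (X + C ((i:ℝ) / n)) with hP_def
  -- the polynomial identity
  have hPq : P = C η * q := by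
    have hroot : ∀ x ∈ Set.Ioo (0:ℝ) 1, (P - C η * q).eval x = 0 := by
      intro x hx
      have h1 := heig x (Set.mem_Icc_of_Ioo hx)
      rw [betaOp_poly n hn q hx, hdeg] at h1
      have h2 : P.eval x = ∑ j ∈ range (k+1),
          q.coeff j * ∏ i ∈ range j, ((n:ℝ) * x + i) / ((n:ℝ) + i) := by
        rw [hP_def]
        simp only [eval_finset_sum, eval_mul, eval_C, eval_prod, eval_add, eval_X]
        refine Finset.sum_congr rfl fun j _ => ?_
        rw [Finset.prod_div_distrib]
        have h3 : ∏ i ∈ range j, ((n:ℝ) * x + i) = (n:ℝ)^j * ∏ i ∈ range j, (x + (i:ℝ)/n) := by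
          calc ∏ i ∈ range j, ((n:ℝ) * x + i)
              = ∏ i ∈ range j, ((n:ℝ) * (x + (i:ℝ)/n)) :=
                Finset.prod_congr rfl fun i _ => by field_simp
            _ = (n:ℝ)^j * ∏ i ∈ range j, (x + (i:ℝ)/n) := by
                rw [Finset.prod_mul_distrib, Finset.prod_const, card_range]
        rw [h3]
        simp only [hw_def]
        rw [Finset.prod_inv_distrib, div_eq_mul_inv]
        ring
      rw [eval_sub, eval_mul, eval_C, h2, h1, sub_self]
    have hz : P - C η * q = 0 := by
      refine Polynomial.eq_zero_of_infinite_isRoot _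
        ((Set.Ioo_infinite (by norm_num : (0:ℝ) < 1)).mono ?_)
      intro x hx
      exact hroot x hx
    exact sub_eq_zero.mp hz
  -- coefficient extraction
  have hk1 : 1 ≤ k := le_trans one_le_two hk
  have hVmonic : ∀ j : ℕ, (∏ i ∈ range j, (X + C ((i:ℝ)/n))).Monic :=
    fun j => monic_prod_of_monic _ _ fun i _ => monic_X_add_C _
  have hVdeg : ∀ j : ℕ, (∏ i ∈ range j, (X + C ((i:ℝ)/n))).natDegree = j := by
    intro j
    rw [Polynomial.natDegree_prod _ _ (fun i _ => (monic_X_add_C _).ne_zero)]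
    simp [natDegree_X_add_C]
  have hcoeffP : P.coeff (k-1) =
      q.coeff (k-1) * w (k-1) * (n:ℝ)^(k-1)
        + q.coeff k * w k * (n:ℝ)^k * ∑ i ∈ range k, (i:ℝ)/n := by
    rw [hP_def, finset_sum_coeff]
    rw [Finset.sum_range_succ]
    have hVk : (∏ i ∈ range k, (X + C ((i:ℝ)/n))).coeff (k-1) = ∑ i ∈ range k, (i:ℝ)/n := by
      rw [Finset.prod_X_add_C_coeff _ _ (by simpa using Nat.sub_le k 1)]
      rw [card_range, show k - (k-1) = 1 by omega, Finset.powersetCard_one, Finset.sum_map]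
      simp
    have hmain : ∑ j ∈ range k, (C (q.coeff j * w j * (n:ℝ) ^ j)
        * ∏ i ∈ range j, (X + C ((i:ℝ)/n))).coeff (k-1)
        = q.coeff (k-1) * w (k-1) * (n:ℝ)^(k-1) := by
      rw [Finset.sum_eq_single (k-1)]
      · have h1 := (hVmonic (k-1)).coeff_natDegree
        rw [hVdeg (k-1)] at h1
        rw [coeff_C_mul, h1, mul_one]
      · intro j hj hjne
        rw [mem_range] at hj
        have hz : (∏ i ∈ range j, (X + C ((i:ℝ)/n))).coeff (k-1) = 0 :=
          coeff_eq_zero_of_natDegree_lt (by rw [hVdeg j]; omega)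
        rw [coeff_C_mul, hz, mul_zero]
      all_goals first
        | (intro h; exact absurd (mem_range.2 (by omega)) h)
        | skip
    rw [hmain, coeff_C_mul, hVk]
  have hcoeffQ : (C η * q).coeff (k-1) = η * q.coeff (k-1) := coeff_C_mul _
  have hqk : q.coeff k = 1 := by rw [← hdeg]; exact hmonic.coeff_natDegree
  have heq := hPq ▸ hcoeffP
  rw [hcoeffQ] at heq
  -- now arithmetic
  have hW : ∀ j, 0 < w j := fun j => Finset.prod_pos fun i _ => by positivity
  have hkr : ((k-1:ℕ):ℝ) = (k:ℝ) - 1 := by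
    push_cast [Nat.cast_sub hk1]; ring
  have hwk : w k = w (k-1) * ((n:ℝ) + ((k:ℝ)-1))⁻¹ := by
    have h1 : w ((k-1)+1) = w (k-1) * ((n:ℝ) + ((k-1:ℕ):ℝ))⁻¹ := by
      simp only [hw_def, Finset.prod_range_succ]
    rw [show (k-1)+1 = k by omega] at h1
    rw [h1, hkr]
  have hgauss : ∑ i ∈ range k, (i:ℝ)/n = (k:ℝ) * ((k:ℝ)-1) / 2 / n := by
    rw [← Finset.sum_div]
    have h2 := Finset.sum_range_id_mul_two k
    have : (∑ i ∈ range k, (i:ℝ)) = (k:ℝ) * ((k:ℝ)-1) / 2 := by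
      have := congrArg (Nat.cast : ℕ → ℝ) h2
      push_cast [Nat.cast_sub hk1] at this
      linarith
    rw [this]
  have hη : η = (n:ℝ)^k * w k := by
    simp only [hη_def, hw_def]
    rw [factorial_prod n hn k, Finset.prod_inv_distrib]
    have hf : (Nat.factorial (n-1) : ℝ) ≠ 0 := by positivity
    have hp : (∏ i ∈ range k, ((n:ℝ) + i)) ≠ 0 :=
      (Finset.prod_pos fun i _ => by positivity).ne'
    field_simp
  rw [hqk, one_mul, hgauss, hη, hwk] at heq
  have hNk : (n:ℝ)^k = (n:ℝ)^(k-1) * n := by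
    rw [← pow_succ, show k - 1 + 1 = k by omega]
  rw [hNk] at heq
  have hwpos := hW (k-1)
  have hNpos : (0:ℝ) < (n:ℝ)^(k-1) := by positivity
  have hnk1 : (0:ℝ) < (n:ℝ) + ((k:ℝ)-1) := by
    have : (1:ℝ) ≤ (k:ℝ) := by exact_mod_cast hk1
    linarith
  -- heq : c * w(k-1) * N + (N*n) * (w(k-1) * (n + (k-1))⁻¹) * (k(k-1)/2/n) = (N*n) * (w(k-1)*(n+(k-1))⁻¹) * c
  have hsne : ((n:ℝ) + ((k:ℝ)-1)) ≠ 0 := hnk1.ne'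
  have hwne : w (k-1) ≠ 0 := hwpos.ne'
  have hNne : ((n:ℝ))^(k-1) ≠ 0 := hNpos.ne'
  have hnne : (n:ℝ) ≠ 0 := hn0.ne'
  have hfin : q.coeff (k-1) * ((n:ℝ) + ((k:ℝ)-1)) + (k:ℝ)*((k:ℝ)-1)/2 = (n:ℝ) * q.coeff (k-1) := by
    have h := heq
    field_simp at h
    have hA : (0:ℝ) < 2 * (n:ℝ) * ((n:ℝ)^(k-1)) * (w (k-1)) * ((n:ℝ) + ((k:ℝ)-1)) := by
      positivity
    refine mul_left_cancel₀ hA.ne' ?_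
    linear_combination -((n:ℝ) * (n:ℝ)^(k-1) * w (k-1) * ((n:ℝ) + ((k:ℝ)-1))) * h
  have hk2 : (k:ℝ) - 1 ≠ 0 := by
    have : (2:ℝ) ≤ (k:ℝ) := by exact_mod_cast hk
    linarith
  have h5 : (q.coeff (k-1) * 2) * ((k:ℝ)-1) = (-(k:ℝ)) * ((k:ℝ)-1) := by linarith [hfin]
  have h6 := mul_right_cancel₀ hk2 h5
  field_simp
  linarith [h6]
end

section
/- For every integer n ≥ 1 and every x ∈ [0,1], the second moment of the Stancu-type operator Lₙ = 𝔅̄ₙ ∘ Bₙ satisfies (𝔅̄ₙ ∘ Bₙ)((e₁ − x·e₀)²; x) = 2x(1−x)/(n+1); that is, if g(u) = Σ_{k=0}^n (k/n − x)²·C(n,k)·u^k(1−u)^{n−k}, then 𝔅̄ₙg(x) = 2x(1−x)/(n+1). -/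
open MeasureTheory Finset

/-- The Bernstein operator. -/
noncomputable def bernsteinOp (n : ℕ) (f : ℝ → ℝ) (x : ℝ) : ℝ :=
  ∑ k ∈ Finset.range (n + 1), f ((k : ℝ) / n) * (n.choose k) * x ^ k * (1 - x) ^ (n - k)

lemma beta_eval_aux {a b : ℝ} (ha : 0 < a) (hb : 0 < b) :
    ((∫ t in (0:ℝ)..1, t ^ (a-1) * (1-t) ^ (b-1) : ℝ) : ℂ) = Complex.betaIntegral a b := by
  rw [Complex.betaIntegral, ← intervalIntegral.integral_ofReal]
  apply intervalIntegral.integral_congr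
  intro t ht
  rw [Set.uIcc_of_le (by norm_num)] at ht
  obtain ⟨h0, h1⟩ := ht
  simp only
  rw [show ((a:ℂ)-1) = ((a-1:ℝ):ℂ) by push_cast; ring,
    show ((b:ℂ)-1) = ((b-1:ℝ):ℂ) by push_cast; ring,
    show (1-(t:ℂ)) = ((1-t:ℝ):ℂ) by push_cast; ring,
    ← Complex.ofReal_cpow h0, ← Complex.ofReal_cpow (by linarith : (0:ℝ) ≤ 1 - t)]
  push_cast
  ring

lemma beta_eval {a b : ℝ} (ha : 0 < a) (hb : 0 < b) :
    ∫ t in (0:ℝ)..1, t ^ (a-1) * (1-t) ^ (b-1) =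
      Real.Gamma a * Real.Gamma b / Real.Gamma (a+b) := by
  have h := Complex.Gamma_mul_Gamma_eq_betaIntegral (s := (a:ℂ)) (t := (b:ℂ))
    (by simpa using ha) (by simpa using hb)
  rw [← beta_eval_aux ha hb, ← Complex.ofReal_add, Complex.Gamma_ofReal, Complex.Gamma_ofReal,
    Complex.Gamma_ofReal] at h
  have h' : Real.Gamma a * Real.Gamma b = Real.Gamma (a+b) * ∫ t in (0:ℝ)..1, t ^ (a-1) * (1-t) ^ (b-1) := by
    exact_mod_cast h
  have hne : Real.Gamma (a+b) ≠ 0 := (Real.Gamma_pos_of_pos (by linarith)).ne'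
  field_simp [hne]
  linarith [h']

lemma beta_integrable {a b : ℝ} (ha : 0 < a) (hb : 0 < b) :
    IntervalIntegrable (fun t : ℝ => t ^ (a-1) * (1-t) ^ (b-1)) volume 0 1 := by
  have h := Complex.betaIntegral_convergent (u := (a:ℂ)) (v := (b:ℂ))
    (by simpa using ha) (by simpa using hb)
  rw [intervalIntegrable_iff_integrableOn_Ioc_of_le (by norm_num)] at h ⊢
  apply IntegrableOn.congr_fun (h.re) _ measurableSet_Ioc
  intro t ht
  obtain ⟨h0, h1⟩ := ht
  have : ((t:ℂ) ^ ((a:ℂ)-1) * (1-(t:ℂ)) ^ ((b:ℂ)-1)) = ((t ^ (a-1) * (1-t) ^ (b-1) : ℝ) : ℂ) := by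
    rw [show ((a:ℂ)-1) = ((a-1:ℝ):ℂ) by push_cast; ring,
      show ((b:ℂ)-1) = ((b-1:ℝ):ℂ) by push_cast; ring,
      show (1-(t:ℂ)) = ((1-t:ℝ):ℂ) by push_cast; ring,
      ← Complex.ofReal_cpow h0.le, ← Complex.ofReal_cpow (by linarith : (0:ℝ) ≤ 1 - t)]
    push_cast
    ring
  simp [this]


lemma bern_moment (n : ℕ) (hn : 1 ≤ n) (x u : ℝ) :
    bernsteinOp n (fun t => (t - x) ^ 2) u = (u - x) ^ 2 + u * (1 - u) / n := by
  have hn0 : (n:ℝ) ≠ 0 := Nat.cast_ne_zero.2 (by omega)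
  set T : ℕ → ℝ := fun k => (n.choose k : ℝ) * u ^ k * (1 - u) ^ (n - k) with hT
  have e0 : ∑ k ∈ Finset.range (n+1), T k = 1 := by
    have := congrArg (Polynomial.eval u) (bernsteinPolynomial.sum ℝ n)
    simpa [bernsteinPolynomial, Polynomial.eval_finset_sum, hT] using this
  have e1 : ∑ k ∈ Finset.range (n+1), (k : ℝ) * T k = n * u := by
    have := congrArg (Polynomial.eval u) (bernsteinPolynomial.sum_smul ℝ n)
    simpa [bernsteinPolynomial, Polynomial.eval_finset_sum, hT, mul_assoc, mul_comm, mul_left_comm]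
      using this
  have e2 : ∑ k ∈ Finset.range (n+1), ((k * (k-1) : ℕ) : ℝ) * T k = (n * (n-1) : ℕ) * u ^ 2 := by
    have := congrArg (Polynomial.eval u) (bernsteinPolynomial.sum_mul_smul ℝ n)
    simpa [bernsteinPolynomial, Polynomial.eval_finset_sum, hT, mul_assoc, mul_comm, mul_left_comm]
      using this
  have key : ∀ k ∈ Finset.range (n+1),
      ((k:ℝ)/n - x) ^ 2 * (n.choose k : ℝ) * u ^ k * (1 - u) ^ (n - k)
        = (1/n^2) * (((k * (k-1) : ℕ) : ℝ) * T k) + (1/n^2 - 2*x/n) * ((k : ℝ) * T k)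
          + x^2 * T k := by
    intro k _
    match k with
    | 0 => simp [hT]
    | (k+1) =>
      simp only [hT, Nat.add_sub_cancel]
      push_cast
      field_simp
      ring
  rw [bernsteinOp, Finset.sum_congr rfl key]
  rw [Finset.sum_add_distrib, Finset.sum_add_distrib, ← Finset.mul_sum, ← Finset.mul_sum,
    ← Finset.mul_sum, e0, e1, e2]
  have hcast : ((n * (n-1) : ℕ) : ℝ) = (n:ℝ)^2 - n := by
    rw [Nat.cast_mul, Nat.cast_sub hn]
    push_cast; ring
  rw [hcast]
  field_simp
  ring


/-- The second moment of the Stancu-type operator `Lₙ = 𝔅̄ₙ ∘ Bₙ` equals `2x(1-x)/(n+1)`. -/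
theorem stancu_second_moment (n : ℕ) (hn : 1 ≤ n) (x : ℝ) (hx : x ∈ Set.Icc (0:ℝ) 1) :
    betaOp n (bernsteinOp n (fun t => (t - x) ^ 2)) x = 2 * x * (1 - x) / ((n : ℝ) + 1) := by
  obtain ⟨hx0, hx1⟩ := hx
  have hn0 : (0:ℝ) < n := by exact_mod_cast Nat.pos_of_ne_zero (by omega)
  rcases eq_or_lt_of_le hx0 with h0 | h0
  · rw [betaOp, if_pos h0.symm, ← h0, bern_moment n hn]
    norm_num
  rcases eq_or_lt_of_le hx1 with h1 | h1
  · rw [betaOp, if_neg (by linarith), if_pos h1, h1, bern_moment n hn]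
    norm_num
  set a : ℝ := (n:ℝ) * x with ha_def
  set b : ℝ := (n:ℝ) * (1 - x) with hb_def
  have ha : 0 < a := by positivity
  have hb : 0 < b := mul_pos hn0 (by linarith)
  have hab : a + b = (n:ℝ) := by rw [ha_def, hb_def]; ring
  have ht0 : (0:ℝ) ≤ 1 := by norm_num
  -- pointwise identity for the numerator integrand
  have hpt : ∀ t ∈ Set.uIcc (0:ℝ) 1,
      t ^ (a - 1) * (1 - t) ^ (b - 1) * bernsteinOp n (fun s => (s - x) ^ 2) t
        = (1 - 1/n) * (t ^ (a + 2 - 1) * (1 - t) ^ (b - 1))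
          + (1/n - 2*x) * (t ^ (a + 1 - 1) * (1 - t) ^ (b - 1))
          + x^2 * (t ^ (a - 1) * (1 - t) ^ (b - 1)) := by
    intro t ht
    rw [Set.uIcc_of_le ht0] at ht
    obtain ⟨ht1, ht2⟩ := ht
    rw [bern_moment n hn]
    rcases eq_or_lt_of_le ht1 with he | he
    · rw [← he]
      rw [Real.zero_rpow (ne_of_gt (by linarith) : a + 2 - 1 ≠ 0), Real.zero_rpow (ne_of_gt (by linarith) : a + 1 - 1 ≠ 0)]
      ring
    rcases eq_or_lt_of_le ht2 with he' | he'
    · rw [he']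
      simp only [Real.one_rpow]
      ring
    have hshift : ∀ c : ℝ, t ^ (c + 1 - 1) = t ^ (c - 1) * t := by
      intro c
      rw [show c + 1 - 1 = (c - 1) + 1 by ring, Real.rpow_add_one (ne_of_gt he)]
    rw [show a + 2 - 1 = (a + 1) + 1 - 1 by ring, hshift (a+1), hshift a]
    ring
  have hi0 := beta_integrable ha hb
  have hi1 := beta_integrable (by linarith : (0:ℝ) < a + 1) hb
  have hi2 := beta_integrable (by linarith : (0:ℝ) < a + 2) hb
  have hnum : (∫ t in (0:ℝ)..1, t ^ (a - 1) * (1 - t) ^ (b - 1)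
        * bernsteinOp n (fun s => (s - x) ^ 2) t)
      = (1 - 1/n) * (∫ t in (0:ℝ)..1, t ^ (a + 2 - 1) * (1 - t) ^ (b - 1))
        + (1/n - 2*x) * (∫ t in (0:ℝ)..1, t ^ (a + 1 - 1) * (1 - t) ^ (b - 1))
        + x^2 * (∫ t in (0:ℝ)..1, t ^ (a - 1) * (1 - t) ^ (b - 1)) := by
    rw [intervalIntegral.integral_congr hpt]
    rw [intervalIntegral.integral_add (((hi2.const_mul _).add (hi1.const_mul _))) (hi0.const_mul _),
      intervalIntegral.integral_add (hi2.const_mul _) (hi1.const_mul _),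
      intervalIntegral.integral_const_mul, intervalIntegral.integral_const_mul,
      intervalIntegral.integral_const_mul]
  rw [betaOp, if_neg (ne_of_gt h0), if_neg (ne_of_lt h1)]
  rw [show (n:ℝ) * x - 1 = a - 1 from rfl, show (n:ℝ) * (1-x) - 1 = b - 1 from rfl]
  rw [hnum, beta_eval ha hb, beta_eval (by linarith) hb, beta_eval (by linarith) hb]
  have g1 : Real.Gamma (a + 1) = a * Real.Gamma a := Real.Gamma_add_one (ne_of_gt ha)
  have g2 : Real.Gamma (a + 2) = (a+1) * (a * Real.Gamma a) := by
    rw [show a + 2 = (a + 1) + 1 by ring, Real.Gamma_add_one (by linarith), g1]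
  have gn1' : Real.Gamma ((n:ℝ)+1) = (n:ℝ) * Real.Gamma n := Real.Gamma_add_one (ne_of_gt hn0)
  have gn1 : Real.Gamma (a + 1 + b) = (n:ℝ) * Real.Gamma n := by
    rw [show a + 1 + b = (n:ℝ) + 1 by rw [← hab]; ring]; exact gn1'
  have gn2 : Real.Gamma (a + 2 + b) = ((n:ℝ)+1) * ((n:ℝ) * Real.Gamma n) := by
    rw [show a + 2 + b = ((n:ℝ) + 1) + 1 by rw [← hab]; ring,
      Real.Gamma_add_one (by positivity), gn1']
  have hGa : Real.Gamma a ≠ 0 := (Real.Gamma_pos_of_pos ha).ne'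
  have hGb : Real.Gamma b ≠ 0 := (Real.Gamma_pos_of_pos hb).ne'
  have hGn : Real.Gamma n ≠ 0 := (Real.Gamma_pos_of_pos hn0).ne'
  rw [g1, g2, gn1, gn2, hab]
  simp only [ha_def]
  have hne : (n:ℝ) ≠ 0 := ne_of_gt hn0
  have hne1 : (n:ℝ) + 1 ≠ 0 := by positivity
  field_simp
  ring
end
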